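/- Let X₁,…,X_K be independent exponential random variables with mean 1, let σ², P₁,…,P_K, N₁,…,N_K > 0, let b₁,…,b_K > 0 with cumulative sums B_k = Σ_{l=1}^k b_l, and set γ_k = X_k·P_k/σ². Then ℙ( for every k ∈ {1,…,K}: Π_{l=1}^k (1+γ_l)^{N_l} < 2^{B_k} ) = [ Π_{k=1}^K (σ²/(N_k P_k))·e^{σ²/P_k} ] · ∫⋯∫ Π_{k=1}^K x_k^{1/N_k − 1} · x_{k−1}^{−1/N_k} · exp( −(σ²/P_k)·(x_k/x_{k−1})^{1/N_k} ) dx₁ ⋯ dx_K, where x₀ = 1 and the integration region is x₀ < x₁ < 2^{B₁}, x₁ < x₂ < 2^{B₂}, …, x_{K−1} < x_K < 2^{B_K}. -/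

import Mathlib

open MeasureTheory ProbabilityTheory Real

/-- The `K`-fold nested integral of eq. (59), written with fuel (so the full integral is
`nestInt σ2 P N B K K 1`): `nestInt σ2 P N B K 0 x = 1` and fuel `j+1` integrates the
variable `x_k` with `k = K − j` over `(x_{k−1}, 2^{B_k})` against
`x_k^{1/N_k − 1}·x_{k−1}^{−1/N_k}·exp(−(σ²/P_k)(x_k/x_{k−1})^{1/N_k})`. -/
noncomputable def nestInt (σ2 : ℝ) (P N B : ℕ → ℝ) (K : ℕ) : ℕ → ℝ → ℝ
  | 0, _ => 1
  | (j + 1), x =>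
      ∫ t in Set.Ioo x ((2 : ℝ) ^ (B (K - j))),
        t ^ (1 / N (K - j) - 1) * x ^ (-(1 / N (K - j)))
          * Real.exp (-(σ2 / P (K - j)) * (t / x) ^ (1 / N (K - j)))
          * nestInt σ2 P N B K j t


private lemma mRpow (c : ℝ) : Measurable fun x : ℝ => x ^ c := by
  have h : (fun x : ℝ => x ^ c) = fun x =>
      if x < 0 then Real.exp (Real.log x * c) * Real.cos (c * π)
      else if x = 0 then (if c = 0 then 1 else 0) else Real.exp (Real.log x * c) := by
    funext x
    rcases lt_trichotomy x 0 with h | h | h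
    · rw [if_pos h, Real.rpow_def_of_neg h]
    · subst h
      rw [if_neg (lt_irrefl _), if_pos rfl]
      by_cases hc : c = 0
      · simp [hc]
      · simp [hc, Real.zero_rpow hc]
    · rw [if_neg (not_lt.2 h.le), if_neg h.ne', Real.rpow_def_of_pos h]
  rw [h]
  refine Measurable.ite (measurableSet_lt measurable_id measurable_const)
    (((Real.measurable_log.mul_const c).exp).mul_const _) ?_
  exact Measurable.ite (measurableSet_eq) measurable_const
    ((Real.measurable_log.mul_const c).exp)

private lemma nestInt_measurable (σ2 : ℝ) (P N B : ℕ → ℝ) (K : ℕ) :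
    ∀ j, Measurable (nestInt σ2 P N B K j) := by
  intro j
  induction j with
  | zero => simpa [nestInt] using measurable_const
  | succ j ih =>
    have hrw : nestInt σ2 P N B K (j + 1) = fun x => ∫ t,
        ({p : ℝ × ℝ | p.1 < p.2 ∧ p.2 < (2 : ℝ) ^ (B (K - j))}.indicator
          (fun p : ℝ × ℝ => p.2 ^ (1 / N (K - j) - 1) * p.1 ^ (-(1 / N (K - j)))
            * Real.exp (-(σ2 / P (K - j)) * (p.2 / p.1) ^ (1 / N (K - j)))
            * nestInt σ2 P N B K j p.2)) (x, t) := by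
      funext x
      rw [nestInt, ← MeasureTheory.integral_indicator measurableSet_Ioo]
      refine MeasureTheory.integral_congr_ae (Filter.Eventually.of_forall fun t => ?_)
      by_cases ht : t ∈ Set.Ioo x ((2 : ℝ) ^ (B (K - j)))
      · have hmem : ((x, t) : ℝ × ℝ) ∈
            {p : ℝ × ℝ | p.1 < p.2 ∧ p.2 < (2 : ℝ) ^ (B (K - j))} := ⟨ht.1, ht.2⟩
        rw [Set.indicator_of_mem ht]
        simp only [Set.indicator_apply]
        rw [if_pos hmem]
      · have hmem : ((x, t) : ℝ × ℝ) ∉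
            {p : ℝ × ℝ | p.1 < p.2 ∧ p.2 < (2 : ℝ) ^ (B (K - j))} := by
          intro hm; exact ht ⟨hm.1, hm.2⟩
        rw [Set.indicator_of_notMem ht]
        simp only [Set.indicator_apply]
        rw [if_neg hmem]
    rw [hrw]
    have hS : MeasurableSet {p : ℝ × ℝ | p.1 < p.2 ∧ p.2 < (2 : ℝ) ^ (B (K - j))} :=
      (measurableSet_lt measurable_fst measurable_snd).inter
        (measurableSet_lt measurable_snd measurable_const)
    have hg : Measurable fun p : ℝ × ℝ => p.2 ^ (1 / N (K - j) - 1) * p.1 ^ (-(1 / N (K - j)))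
        * Real.exp (-(σ2 / P (K - j)) * (p.2 / p.1) ^ (1 / N (K - j)))
        * nestInt σ2 P N B K j p.2 := by
      refine (((((mRpow _).comp measurable_snd).mul ((mRpow _).comp measurable_fst)).mul
        ?_).mul (ih.comp measurable_snd))
      exact (((mRpow _).comp (measurable_snd.div measurable_fst)).const_mul _).exp
    exact ((hg.indicator hS).stronglyMeasurable.integral_prod_right').measurable

private lemma nestInt_nonneg (σ2 : ℝ) (P N B : ℕ → ℝ) (K : ℕ) :
    ∀ j, ∀ x : ℝ, 0 < x → 0 ≤ nestInt σ2 P N B K j x := by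
  intro j
  induction j with
  | zero => intro x _; simp [nestInt]
  | succ j ih =>
    intro x hx
    rw [nestInt]
    refine MeasureTheory.setIntegral_nonneg measurableSet_Ioo fun t ht => ?_
    refine mul_nonneg (mul_nonneg (mul_nonneg ?_ ?_) (Real.exp_nonneg _)) (ih t (hx.trans ht.1))
    · exact Real.rpow_nonneg (hx.trans ht.1).le _
    · exact Real.rpow_nonneg hx.le _

private lemma forall_Icc_split {k₀ K : ℕ} (h : k₀ ≤ K) (Q : ℕ → Prop) :
    (∀ k ∈ Finset.Icc k₀ K, Q k) ↔ Q k₀ ∧ ∀ k ∈ Finset.Icc (k₀ + 1) K, Q k := by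
  have hins : Finset.Icc k₀ K = insert k₀ (Finset.Icc (k₀ + 1) K) := by
    ext m; simp only [Finset.mem_Icc, Finset.mem_insert]; omega
  rw [hins, Finset.forall_mem_insert]

private lemma prod_Icc_split {k₀ k : ℕ} (h : k₀ ≤ k) (f : ℕ → ℝ) :
    ∏ l ∈ Finset.Icc k₀ k, f l = f k₀ * ∏ l ∈ Finset.Icc (k₀ + 1) k, f l := by
  have hins : Finset.Icc k₀ k = insert k₀ (Finset.Icc (k₀ + 1) k) := by
    ext m; simp only [Finset.mem_Icc, Finset.mem_insert]; omega
  rw [hins, Finset.prod_insert (by simp [Finset.mem_Icc])]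

private lemma step_prob {Ω : Type*} [MeasurableSpace Ω] (μ : Measure Ω) [IsProbabilityMeasure μ]
    (X : ℕ → Ω → ℝ) (hmeas : ∀ k, Measurable (X k))
    (hindep : iIndepFun X μ)
    (σ2 : ℝ) (P N B : ℕ → ℝ) (k₀ K : ℕ) (hk₀K : k₀ ≤ K)
    (hlaw : μ.map (X k₀) = expMeasure 1) (x : ℝ) :
    μ {ω | ∀ k ∈ Finset.Icc k₀ K,
        x * ∏ l ∈ Finset.Icc k₀ k, (1 + X l ω * P l / σ2) ^ (N l) < (2 : ℝ) ^ (B k)}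
      = ∫⁻ y in Set.Ioi (0 : ℝ), ENNReal.ofReal (Real.exp (-y)) *
          (if x * (1 + y * P k₀ / σ2) ^ (N k₀) < (2 : ℝ) ^ (B k₀) then
            μ {ω | ∀ k ∈ Finset.Icc (k₀ + 1) K,
              x * (1 + y * P k₀ / σ2) ^ (N k₀) *
                ∏ l ∈ Finset.Icc (k₀ + 1) k, (1 + X l ω * P l / σ2) ^ (N l) < (2 : ℝ) ^ (B k)}
          else 0) ∂(volume) := by
  classical
  set S₂ : Finset ℕ := Finset.Icc (k₀ + 1) K with hS₂
  set g : Ω → (S₂ → ℝ) := fun ω i => X i ω with hgdef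
  have hg : Measurable g := measurable_pi_lambda _ fun i => hmeas i
  set w : ℝ × (S₂ → ℝ) → ℕ → ℝ :=
    fun p l => if h : l ∈ S₂ then p.2 ⟨l, h⟩ else if l = k₀ then p.1 else 0 with hwdef
  have hwm : ∀ l, Measurable fun p : ℝ × (S₂ → ℝ) => w p l := by
    intro l
    by_cases h : l ∈ S₂
    · simp only [hwdef, dif_pos h]; exact (measurable_pi_apply _).comp measurable_snd
    · by_cases h2 : l = k₀
      · simp only [hwdef, dif_neg h, if_pos h2]; exact measurable_fst
      · simp only [hwdef, dif_neg h, if_neg h2]; exact measurable_const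
  set C : Set (ℝ × (S₂ → ℝ)) := {p | ∀ k ∈ Finset.Icc k₀ K,
      x * ∏ l ∈ Finset.Icc k₀ k, (1 + w p l * P l / σ2) ^ (N l) < (2 : ℝ) ^ (B k)} with hCdef
  have hC : MeasurableSet C := by
    have hCeq : C = ⋂ k ∈ Finset.Icc k₀ K, {p : ℝ × (S₂ → ℝ) |
        x * ∏ l ∈ Finset.Icc k₀ k, (1 + w p l * P l / σ2) ^ (N l) < (2 : ℝ) ^ (B k)} := by
      ext p; simp [hCdef, Set.mem_iInter]
    rw [hCeq]
    refine MeasurableSet.biInter (Finset.Icc k₀ K).countable_toSet fun k _ => ?_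
    refine measurableSet_lt (Measurable.const_mul ?_ x) measurable_const
    refine Finset.measurable_prod _ fun l _ => ?_
    exact (mRpow (N l)).comp ((((hwm l).mul_const (P l)).div_const σ2).const_add 1)
  have hπ : Measurable fun ω => (X k₀ ω, g ω) := (hmeas k₀).prodMk hg
  have hpre : (fun ω => (X k₀ ω, g ω)) ⁻¹' C = {ω | ∀ k ∈ Finset.Icc k₀ K,
      x * ∏ l ∈ Finset.Icc k₀ k, (1 + X l ω * P l / σ2) ^ (N l) < (2 : ℝ) ^ (B k)} := by
    ext ω
    simp only [Set.mem_preimage, hCdef, Set.mem_setOf_eq]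
    refine forall₂_congr fun k hk => ?_
    have hprod : ∏ l ∈ Finset.Icc k₀ k, (1 + w (X k₀ ω, g ω) l * P l / σ2) ^ (N l)
        = ∏ l ∈ Finset.Icc k₀ k, (1 + X l ω * P l / σ2) ^ (N l) := by
      refine Finset.prod_congr rfl fun l hl => ?_
      by_cases h : l ∈ S₂
      · simp only [hwdef, dif_pos h, hgdef]
      · have hlk : l = k₀ := by
          have hl' := Finset.mem_Icc.1 hl
          have hk' := Finset.mem_Icc.1 hk
          simp only [hS₂, Finset.mem_Icc] at h; omega
        subst hlk
        simp [hwdef, dif_neg h]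
    rw [hprod]
  haveI : IsProbabilityMeasure (μ.map g) := Measure.isProbabilityMeasure_map hg.aemeasurable
  have h2 : IndepFun (X k₀) g μ := by
    have hd : Disjoint ({k₀} : Finset ℕ) S₂ := by
      simp only [Finset.disjoint_left, Finset.mem_singleton, hS₂, Finset.mem_Icc]
      rintro a rfl; omega
    have h1 := hindep.indepFun_finset {k₀} S₂ hd hmeas
    exact h1.comp (measurable_pi_apply (⟨k₀, Finset.mem_singleton_self k₀⟩ : ({k₀} : Finset ℕ)))
      measurable_id
  have hmap : μ.map (fun ω => (X k₀ ω, g ω)) = (expMeasure 1).prod (μ.map g) := by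
    rw [← hlaw]
    exact (indepFun_iff_map_prod_eq_prod_map_map (hmeas k₀).aemeasurable hg.aemeasurable).1 h2
  have hQm : Measurable fun y => (μ.map g) (Prod.mk y ⁻¹' C) := measurable_measure_prodMk_left hC
  calc μ {ω | ∀ k ∈ Finset.Icc k₀ K,
        x * ∏ l ∈ Finset.Icc k₀ k, (1 + X l ω * P l / σ2) ^ (N l) < (2 : ℝ) ^ (B k)}
      = (μ.map (fun ω => (X k₀ ω, g ω))) C := by rw [Measure.map_apply hπ hC, hpre]
    _ = ((expMeasure 1).prod (μ.map g)) C := by rw [hmap]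
    _ = ∫⁻ y, (μ.map g) (Prod.mk y ⁻¹' C) ∂(expMeasure 1) := Measure.prod_apply hC
    _ = ∫⁻ y, (exponentialPDF 1 * fun y => (μ.map g) (Prod.mk y ⁻¹' C)) y ∂volume := by
        have hpdfm : Measurable (exponentialPDF 1) :=
          (measurable_exponentialPDFReal 1).ennreal_ofReal
        rw [show expMeasure 1 = volume.withDensity (exponentialPDF 1) from rfl,
          lintegral_withDensity_eq_lintegral_mul volume hpdfm hQm]
    _ = (∫⁻ y in Set.Ioi (0 : ℝ), (exponentialPDF 1 * fun y => (μ.map g) (Prod.mk y ⁻¹' C)) y)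
          + ∫⁻ y in (Set.Ioi (0 : ℝ))ᶜ, (exponentialPDF 1 * fun y => (μ.map g) (Prod.mk y ⁻¹' C)) y :=
        (lintegral_add_compl _ measurableSet_Ioi).symm
    _ = ∫⁻ y in Set.Ioi (0 : ℝ), (exponentialPDF 1 * fun y => (μ.map g) (Prod.mk y ⁻¹' C)) y := by
        have h0 : ∀ᵐ (y : ℝ) ∂(volume.restrict (Set.Ioi (0:ℝ))ᶜ),
            (exponentialPDF 1 * fun y => (μ.map g) (Prod.mk y ⁻¹' C)) y = 0 := by
          refine (ae_restrict_iff' measurableSet_Ioi.compl).2 ?_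
          have hne : ∀ᵐ (y : ℝ) ∂volume, y ≠ 0 :=
            ae_iff.2 (by simpa using measure_singleton (0 : ℝ))
          refine hne.mono fun y hy hyc => ?_
          have : y < 0 := by
            simp only [Set.compl_Ioi, Set.mem_Iic] at hyc
            exact lt_of_le_of_ne hyc hy
          simp [Pi.mul_apply, exponentialPDF_of_neg this]
        rw [lintegral_congr_ae h0, lintegral_zero, add_zero]
    _ = ∫⁻ y in Set.Ioi (0 : ℝ), ENNReal.ofReal (Real.exp (-y)) *
          (if x * (1 + y * P k₀ / σ2) ^ (N k₀) < (2 : ℝ) ^ (B k₀) then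
            μ {ω | ∀ k ∈ Finset.Icc (k₀ + 1) K,
              x * (1 + y * P k₀ / σ2) ^ (N k₀) *
                ∏ l ∈ Finset.Icc (k₀ + 1) k, (1 + X l ω * P l / σ2) ^ (N l) < (2 : ℝ) ^ (B k)}
          else 0) := by
        refine setLIntegral_congr_fun measurableSet_Ioi (fun y hy => ?_)
        have hpdf : exponentialPDF 1 y = ENNReal.ofReal (Real.exp (-y)) := by
          rw [exponentialPDF_of_nonneg (le_of_lt hy)]; norm_num
        have hkey : ∀ ω, ((y, g ω) ∈ C) ↔ (x * (1 + y * P k₀ / σ2) ^ (N k₀) < (2 : ℝ) ^ (B k₀) ∧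
            ∀ k ∈ Finset.Icc (k₀ + 1) K, x * (1 + y * P k₀ / σ2) ^ (N k₀) *
              ∏ l ∈ Finset.Icc (k₀ + 1) k, (1 + X l ω * P l / σ2) ^ (N l) < (2 : ℝ) ^ (B k)) := by
          intro ω
          have hw0 : w (y, g ω) k₀ = y := by
            have hns : k₀ ∉ S₂ := by simp [hS₂, Finset.mem_Icc]
            simp [hwdef, hns]
          have hrw : ∀ k ∈ Finset.Icc k₀ K,
              x * ∏ l ∈ Finset.Icc k₀ k, (1 + w (y, g ω) l * P l / σ2) ^ (N l)
              = x * (1 + y * P k₀ / σ2) ^ (N k₀) *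
                  ∏ l ∈ Finset.Icc (k₀ + 1) k, (1 + X l ω * P l / σ2) ^ (N l) := by
            intro k hk
            obtain ⟨hk1, hk2⟩ := Finset.mem_Icc.1 hk
            rw [prod_Icc_split hk1, hw0]
            have hpr : ∏ l ∈ Finset.Icc (k₀ + 1) k, (1 + w (y, g ω) l * P l / σ2) ^ (N l)
                = ∏ l ∈ Finset.Icc (k₀ + 1) k, (1 + X l ω * P l / σ2) ^ (N l) := by
              refine Finset.prod_congr rfl fun l hl => ?_
              obtain ⟨hl1, hl2⟩ := Finset.mem_Icc.1 hl
              have hlS : l ∈ S₂ := by simp only [hS₂, Finset.mem_Icc]; omega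
              simp only [hwdef, dif_pos hlS, hgdef]
            rw [hpr, ← mul_assoc]
          have step1 : ((y, g ω) ∈ C) ↔ ∀ k ∈ Finset.Icc k₀ K,
              x * (1 + y * P k₀ / σ2) ^ (N k₀) *
                ∏ l ∈ Finset.Icc (k₀ + 1) k, (1 + X l ω * P l / σ2) ^ (N l) < (2 : ℝ) ^ (B k) := by
            simp only [hCdef, Set.mem_setOf_eq]
            exact forall₂_congr fun k hk => by rw [hrw k hk]
          rw [step1, forall_Icc_split hk₀K, show Finset.Icc (k₀ + 1) k₀ = ∅ from
            Finset.Icc_eq_empty (by omega), Finset.prod_empty, mul_one]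
        rw [Pi.mul_apply, hpdf, Measure.map_apply hg (hC.preimage measurable_prodMk_left)]
        congr 1
        by_cases hcond : x * (1 + y * P k₀ / σ2) ^ (N k₀) < (2 : ℝ) ^ (B k₀)
        · rw [if_pos hcond]
          congr 1
          ext ω
          simp only [Set.mem_preimage, Set.mem_setOf_eq]
          rw [hkey ω]
          exact and_iff_right hcond
        · rw [if_neg hcond]
          have : g ⁻¹' (Prod.mk y ⁻¹' C) = ∅ := by
            ext ω
            simp only [Set.mem_preimage, Set.mem_empty_iff_false, iff_false]
            intro hmem
            exact hcond ((hkey ω).1 hmem).1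
          rw [this, measure_empty]

private lemma step_subst (σ2 Pk Nk Mv x : ℝ) (hσ : 0 < σ2) (hP : 0 < Pk) (hN : 0 < Nk)
    (hx : 0 < x) (hxM : x < Mv) (G : ℝ → ℝ) (hG : Measurable G) (hGnn : ∀ t, 0 < t → 0 ≤ G t) :
    (∫⁻ y in Set.Ioi (0 : ℝ), ENNReal.ofReal (Real.exp (-y)) *
        (if x * (1 + y * Pk / σ2) ^ Nk < Mv then
          ENNReal.ofReal (G (x * (1 + y * Pk / σ2) ^ Nk)) else 0) ∂volume).toReal
      = σ2 / (Nk * Pk) * Real.exp (σ2 / Pk) *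
          ∫ t in Set.Ioo x Mv, t ^ (1 / Nk - 1) * x ^ (-(1 / Nk)) *
            Real.exp (-(σ2 / Pk) * (t / x) ^ (1 / Nk)) * G t := by
  set p := 1 / Nk with hpdef
  have hp : 0 < p := by rw [hpdef]; positivity
  have hσP : 0 < σ2 / Pk := div_pos hσ hP
  have hM0 : 0 < Mv := hx.trans hxM
  have hNp : Nk * p = 1 := by rw [hpdef]; field_simp
  have hpN : p * Nk = 1 := by rw [hpdef]; field_simp
  set c := σ2 / Pk * ((Mv / x) ^ p - 1) with hcdef
  set f := fun t : ℝ => σ2 / Pk * ((t / x) ^ p - 1) with hfdef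
  have hMx1 : 1 < Mv / x := (one_lt_div hx).2 hxM
  have hMxp1 : 1 < (Mv / x) ^ p := by
    have h := Real.rpow_lt_rpow zero_le_one hMx1 hp; rwa [Real.one_rpow] at h
  have hc : 0 < c := mul_pos hσP (sub_pos.2 hMxp1)
  have hu : ∀ y : ℝ, 0 < y → 0 < y * Pk / σ2 := fun y hy => div_pos (mul_pos hy hP) hσ
  have hA1 : ∀ y : ℝ, 0 < y → 1 < (1 + y * Pk / σ2) ^ Nk := by
    intro y hy
    have h1 : (1 : ℝ) < 1 + y * Pk / σ2 := lt_add_of_pos_right 1 (hu y hy)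
    have h := Real.rpow_lt_rpow zero_le_one h1 hN; rwa [Real.one_rpow] at h
  have hφpos : ∀ y : ℝ, 0 < y → 0 < x * (1 + y * Pk / σ2) ^ Nk :=
    fun y hy => mul_pos hx (lt_trans one_pos (hA1 y hy))
  have hMvx : ((Mv / x) ^ p) ^ Nk = Mv / x := by
    rw [← Real.rpow_mul (div_pos hM0 hx).le p Nk, hpN, Real.rpow_one]
  have hcond : ∀ y : ℝ, 0 < y → (x * (1 + y * Pk / σ2) ^ Nk < Mv ↔ y < c) := by
    intro y hy
    have h1u : (0 : ℝ) ≤ 1 + y * Pk / σ2 := by nlinarith [hu y hy]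
    have e1 : x * (1 + y * Pk / σ2) ^ Nk < Mv ↔ (1 + y * Pk / σ2) ^ Nk < Mv / x := by
      rw [mul_comm]; exact (lt_div_iff₀ hx).symm
    have e2 : (1 + y * Pk / σ2) ^ Nk < Mv / x ↔ 1 + y * Pk / σ2 < (Mv / x) ^ p := by
      conv_lhs => rw [← hMvx]
      exact Real.rpow_lt_rpow_iff h1u (Real.rpow_nonneg (div_pos hM0 hx).le p) hN
    have hk : σ2 / Pk * (y * Pk / σ2) = y := by field_simp
    have e3 : 1 + y * Pk / σ2 < (Mv / x) ^ p ↔ y < c := by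
      rw [hcdef]
      constructor
      · intro h
        calc y = σ2 / Pk * (y * Pk / σ2) := hk.symm
          _ < σ2 / Pk * ((Mv / x) ^ p - 1) := by
              exact mul_lt_mul_of_pos_left (by linarith) hσP
      · intro h
        have h2 : σ2 / Pk * (y * Pk / σ2) < σ2 / Pk * ((Mv / x) ^ p - 1) := by rw [hk]; exact h
        have h3 := (mul_lt_mul_iff_right₀ hσP).1 h2
        linarith
    exact e1.trans (e2.trans e3)
  have hφf : ∀ t ∈ Set.Ioo x Mv, x * (1 + f t * Pk / σ2) ^ Nk = t := by
    intro t ht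
    have htx : 0 < t / x := div_pos (hx.trans ht.1) hx
    have e1 : f t * Pk / σ2 = (t / x) ^ p - 1 := by simp only [hfdef]; field_simp
    rw [e1, show (1 : ℝ) + ((t / x) ^ p - 1) = (t / x) ^ p by ring,
      ← Real.rpow_mul htx.le, hpN, Real.rpow_one]
    field_simp
  have hfφ : ∀ y : ℝ, 0 < y → f (x * (1 + y * Pk / σ2) ^ Nk) = y := by
    intro y hy
    have h1u : (0 : ℝ) < 1 + y * Pk / σ2 := by nlinarith [hu y hy]
    simp only [hfdef]
    rw [mul_div_cancel_left₀ _ hx.ne', ← Real.rpow_mul h1u.le, hNp, Real.rpow_one]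
    field_simp
    ring
  have himg : f '' Set.Ioo x Mv = Set.Ioo 0 c := by
    ext z
    constructor
    · rintro ⟨t, ht, rfl⟩
      have htx1 : 1 < t / x := (one_lt_div hx).2 ht.1
      have h1 : 1 < (t / x) ^ p := by
        have h := Real.rpow_lt_rpow zero_le_one htx1 hp; rwa [Real.one_rpow] at h
      have h2 : (t / x) ^ p < (Mv / x) ^ p :=
        Real.rpow_lt_rpow (by positivity) ((div_lt_div_iff_of_pos_right hx).2 ht.2) hp
      exact ⟨mul_pos hσP (sub_pos.2 h1), mul_lt_mul_of_pos_left (by linarith) hσP⟩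
    · intro hz
      refine ⟨x * (1 + z * Pk / σ2) ^ Nk, ⟨?_, (hcond z hz.1).2 hz.2⟩, hfφ z hz.1⟩
      nlinarith [hA1 z hz.1]
  have hderiv : ∀ t ∈ Set.Ioo x Mv,
      HasDerivWithinAt f (σ2 / Pk * (p * (t / x) ^ (p - 1) * x⁻¹)) (Set.Ioo x Mv) t := by
    intro t ht
    have htx : t / x ≠ 0 := (div_pos (hx.trans ht.1) hx).ne'
    have h1 : HasDerivAt (fun s : ℝ => s / x) x⁻¹ t := by
      simpa [one_div] using (hasDerivAt_id t).div_const x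
    have h2 : HasDerivAt (fun s : ℝ => (s / x) ^ p) (p * (t / x) ^ (p - 1) * x⁻¹) t := by
      have h3 := (Real.hasDerivAt_rpow_const (x := t / x) (p := p) (Or.inl htx)).comp t h1
      simpa [Function.comp_def] using h3
    have h4 : HasDerivAt f (σ2 / Pk * (p * (t / x) ^ (p - 1) * x⁻¹)) t := by
      have h5 := (h2.sub_const 1).const_mul (σ2 / Pk)
      simpa [hfdef] using h5
    exact h4.hasDerivWithinAt
  have hinj : Set.InjOn f (Set.Ioo x Mv) := by
    intro a ha b hb hab
    have hax : (0 : ℝ) ≤ a / x := (div_pos (hx.trans ha.1) hx).le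
    have hbx : (0 : ℝ) ≤ b / x := (div_pos (hx.trans hb.1) hx).le
    simp only [hfdef] at hab
    have h1 : (a / x) ^ p = (b / x) ^ p := by
      have h := mul_left_cancel₀ hσP.ne' hab; linarith
    have h2 : a / x = b / x := by
      have e := congrArg (fun z : ℝ => z ^ Nk) h1
      rwa [← Real.rpow_mul hax, ← Real.rpow_mul hbx, hpN, Real.rpow_one, Real.rpow_one] at e
    have e2 := congrArg (fun z : ℝ => z * x) h2
    simpa [div_mul_cancel₀, hx.ne'] using e2
  have hφm : Measurable fun y : ℝ => x * (1 + y * Pk / σ2) ^ Nk :=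
    ((mRpow Nk).comp ((((measurable_id.mul_const Pk)).div_const σ2).const_add 1)).const_mul x
  have step1 : (∫⁻ y in Set.Ioi (0 : ℝ), ENNReal.ofReal (Real.exp (-y)) *
        (if x * (1 + y * Pk / σ2) ^ Nk < Mv then
          ENNReal.ofReal (G (x * (1 + y * Pk / σ2) ^ Nk)) else 0) ∂volume)
      = ∫⁻ y in Set.Ioo (0 : ℝ) c,
          ENNReal.ofReal (Real.exp (-y) * G (x * (1 + y * Pk / σ2) ^ Nk)) ∂volume := by
    have hpt : ∀ y ∈ Set.Ioi (0 : ℝ), ENNReal.ofReal (Real.exp (-y)) *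
        (if x * (1 + y * Pk / σ2) ^ Nk < Mv then
          ENNReal.ofReal (G (x * (1 + y * Pk / σ2) ^ Nk)) else 0)
        = (Set.Ioo (0 : ℝ) c).indicator
            (fun y => ENNReal.ofReal (Real.exp (-y) * G (x * (1 + y * Pk / σ2) ^ Nk))) y := by
      intro y hy
      by_cases hyc : y < c
      · rw [if_pos ((hcond y hy).2 hyc), Set.indicator_of_mem (Set.mem_Ioo.2 ⟨hy, hyc⟩),
          ENNReal.ofReal_mul (Real.exp_nonneg _)]
      · have hnc : ¬ x * (1 + y * Pk / σ2) ^ Nk < Mv := fun hcd => hyc ((hcond y hy).1 hcd)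
        rw [if_neg hnc, Set.indicator_of_notMem (fun hm => hyc (Set.mem_Ioo.1 hm).2), mul_zero]
    rw [setLIntegral_congr_fun measurableSet_Ioi hpt,
      lintegral_indicator measurableSet_Ioo, Measure.restrict_restrict measurableSet_Ioo,
      Set.inter_eq_left.2 (fun z hz => hz.1)]
  have step2 : (∫⁻ y in Set.Ioo (0 : ℝ) c,
        ENNReal.ofReal (Real.exp (-y) * G (x * (1 + y * Pk / σ2) ^ Nk)) ∂volume).toReal
      = ∫ y in Set.Ioo (0 : ℝ) c, Real.exp (-y) * G (x * (1 + y * Pk / σ2) ^ Nk) := by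
    refine (integral_eq_lintegral_of_nonneg_ae ?_ ?_).symm
    · refine (ae_restrict_iff' measurableSet_Ioo).2 (Filter.Eventually.of_forall fun y hy => ?_)
      exact mul_nonneg (Real.exp_nonneg _) (hGnn _ (hφpos y hy.1))
    · exact ((Real.measurable_exp.comp measurable_neg).mul (hG.comp hφm)).aestronglyMeasurable
  have step3 : ∫ y in Set.Ioo (0 : ℝ) c, Real.exp (-y) * G (x * (1 + y * Pk / σ2) ^ Nk)
      = ∫ t in Set.Ioo x Mv, |σ2 / Pk * (p * (t / x) ^ (p - 1) * x⁻¹)| •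
          (Real.exp (-(f t)) * G (x * (1 + f t * Pk / σ2) ^ Nk)) := by
    rw [← himg, integral_image_eq_integral_abs_deriv_smul measurableSet_Ioo hderiv hinj]
  have step4 : ∫ t in Set.Ioo x Mv, |σ2 / Pk * (p * (t / x) ^ (p - 1) * x⁻¹)| •
          (Real.exp (-(f t)) * G (x * (1 + f t * Pk / σ2) ^ Nk))
      = ∫ t in Set.Ioo x Mv, (σ2 / (Nk * Pk) * Real.exp (σ2 / Pk)) *
          (t ^ (p - 1) * x ^ (-p) * Real.exp (-(σ2 / Pk) * (t / x) ^ p) * G t) := by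
    refine setIntegral_congr_fun measurableSet_Ioo fun t ht => ?_
    have ht0 : 0 < t := hx.trans ht.1
    have htx : 0 < t / x := div_pos ht0 hx
    rw [hφf t ht]
    have habs : |σ2 / Pk * (p * (t / x) ^ (p - 1) * x⁻¹)|
        = σ2 / Pk * (p * (t / x) ^ (p - 1) * x⁻¹) := by
      refine abs_of_nonneg ?_
      have := Real.rpow_nonneg htx.le (p - 1)
      have hxi : (0:ℝ) ≤ x⁻¹ := inv_nonneg.2 hx.le
      positivity
    have hd2 : σ2 / Pk * (p * (t / x) ^ (p - 1) * x⁻¹) = σ2 / (Nk * Pk) * (t ^ (p - 1) * x ^ (-p)) := by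
      have e1 : (t / x) ^ (p - 1) = t ^ (p - 1) * x ^ (-(p - 1)) := by
        rw [Real.div_rpow ht0.le hx.le, Real.rpow_neg hx.le, div_eq_mul_inv]
      have e2 : x ^ (-(p - 1)) * x⁻¹ = x ^ (-p) := by
        rw [← Real.rpow_neg_one x, ← Real.rpow_add hx]
        congr 1; ring
      rw [e1, ← e2, hpdef]
      ring
    have hexp : Real.exp (-(f t)) = Real.exp (σ2 / Pk) * Real.exp (-(σ2 / Pk) * (t / x) ^ p) := by
      rw [← Real.exp_add]; congr 1; simp only [hfdef]; ring
    rw [habs, smul_eq_mul, hd2, hexp]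
    ring
  calc (∫⁻ y in Set.Ioi (0 : ℝ), ENNReal.ofReal (Real.exp (-y)) *
        (if x * (1 + y * Pk / σ2) ^ Nk < Mv then
          ENNReal.ofReal (G (x * (1 + y * Pk / σ2) ^ Nk)) else 0) ∂volume).toReal
      = (∫⁻ y in Set.Ioo (0 : ℝ) c,
          ENNReal.ofReal (Real.exp (-y) * G (x * (1 + y * Pk / σ2) ^ Nk)) ∂volume).toReal := by
        rw [step1]
    _ = ∫ y in Set.Ioo (0 : ℝ) c, Real.exp (-y) * G (x * (1 + y * Pk / σ2) ^ Nk) := step2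
    _ = _ := step3
    _ = _ := step4
    _ = σ2 / (Nk * Pk) * Real.exp (σ2 / Pk) *
          ∫ t in Set.Ioo x Mv, t ^ (p - 1) * x ^ (-p) *
            Real.exp (-(σ2 / Pk) * (t / x) ^ p) * G t := integral_const_mul _ _


private lemma aux_main {Ω : Type*} [MeasurableSpace Ω] (μ : Measure Ω) [IsProbabilityMeasure μ]
    (K : ℕ) (X : ℕ → Ω → ℝ) (hmeas : ∀ k, Measurable (X k))
    (hindep : iIndepFun X μ)
    (hlaw : ∀ k ∈ Finset.Icc 1 K, μ.map (X k) = expMeasure 1)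
    (σ2 : ℝ) (hσ : 0 < σ2) (P N B : ℕ → ℝ)
    (hP : ∀ k ∈ Finset.Icc 1 K, 0 < P k) (hN : ∀ k ∈ Finset.Icc 1 K, 0 < N k) :
    ∀ j, j ≤ K → ∀ x : ℝ, 0 < x →
      (μ {ω | ∀ k ∈ Finset.Icc (K - j + 1) K,
        x * ∏ l ∈ Finset.Icc (K - j + 1) k, (1 + X l ω * P l / σ2) ^ (N l)
          < (2 : ℝ) ^ (B k)}).toReal
      = (∏ k ∈ Finset.Icc (K - j + 1) K, σ2 / (N k * P k) * Real.exp (σ2 / P k))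
          * nestInt σ2 P N B K j x := by
  intro j
  induction j with
  | zero =>
    intro _ x _
    rw [Nat.sub_zero, Finset.Icc_eq_empty (by omega : ¬ K + 1 ≤ K)]
    simp [nestInt]
  | succ j IH =>
    intro hjK x hx
    have hk₀1 : 1 ≤ K - j := by omega
    have hk₀K : K - j ≤ K := by omega
    have hIcc : K - (j + 1) + 1 = K - j := by omega
    rw [hIcc]
    have hk₀mem : K - j ∈ Finset.Icc 1 K := Finset.mem_Icc.2 ⟨hk₀1, hk₀K⟩
    have hstep := step_prob μ X hmeas hindep σ2 P N B (K - j) K hk₀K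
      (hlaw (K - j) hk₀mem) x
    rw [hstep]
    by_cases hxM : x < (2 : ℝ) ^ (B (K - j))
    · -- main case
      have hcongr : ∀ y ∈ Set.Ioi (0 : ℝ), ENNReal.ofReal (Real.exp (-y)) *
          (if x * (1 + y * P (K - j) / σ2) ^ (N (K - j)) < (2 : ℝ) ^ (B (K - j)) then
            μ {ω | ∀ k ∈ Finset.Icc (K - j + 1) K,
              x * (1 + y * P (K - j) / σ2) ^ (N (K - j)) *
                ∏ l ∈ Finset.Icc (K - j + 1) k, (1 + X l ω * P l / σ2) ^ (N l)
                  < (2 : ℝ) ^ (B k)}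
          else 0)
          = ENNReal.ofReal (Real.exp (-y)) *
          (if x * (1 + y * P (K - j) / σ2) ^ (N (K - j)) < (2 : ℝ) ^ (B (K - j)) then
            ENNReal.ofReal
              ((∏ k ∈ Finset.Icc (K - j + 1) K, σ2 / (N k * P k) * Real.exp (σ2 / P k)) *
                nestInt σ2 P N B K j (x * (1 + y * P (K - j) / σ2) ^ (N (K - j))))
          else 0) := by
        intro y hy
        congr 1
        by_cases hcd : x * (1 + y * P (K - j) / σ2) ^ (N (K - j)) < (2 : ℝ) ^ (B (K - j))
        · rw [if_pos hcd, if_pos hcd]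
          have hupos : 0 < y * P (K - j) / σ2 := div_pos (mul_pos hy (hP _ hk₀mem)) hσ
          have hpos : 0 < x * (1 + y * P (K - j) / σ2) ^ (N (K - j)) :=
            mul_pos hx (Real.rpow_pos_of_pos (by linarith) _)
          have hIH := IH (by omega) _ hpos
          rw [← hIH, ENNReal.ofReal_toReal (measure_ne_top μ _)]
        · rw [if_neg hcd, if_neg hcd]
      rw [setLIntegral_congr_fun measurableSet_Ioi hcongr]
      have hCjnn : 0 ≤ ∏ k ∈ Finset.Icc (K - j + 1) K, σ2 / (N k * P k) * Real.exp (σ2 / P k) := by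
        refine Finset.prod_nonneg fun k hk => ?_
        have hkmem : k ∈ Finset.Icc 1 K := by
          obtain ⟨h1, h2⟩ := Finset.mem_Icc.1 hk
          exact Finset.mem_Icc.2 ⟨by omega, h2⟩
        exact mul_nonneg (div_pos hσ (mul_pos (hN k hkmem) (hP k hkmem))).le (Real.exp_nonneg _)
      have hGm : Measurable fun t =>
          (∏ k ∈ Finset.Icc (K - j + 1) K, σ2 / (N k * P k) * Real.exp (σ2 / P k)) *
            nestInt σ2 P N B K j t :=
        (nestInt_measurable σ2 P N B K j).const_mul _
      have hGnn : ∀ t : ℝ, 0 < t →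
          0 ≤ (∏ k ∈ Finset.Icc (K - j + 1) K, σ2 / (N k * P k) * Real.exp (σ2 / P k)) *
            nestInt σ2 P N B K j t :=
        fun t ht => mul_nonneg hCjnn (nestInt_nonneg σ2 P N B K j t ht)
      have hsub := step_subst σ2 (P (K - j)) (N (K - j)) ((2 : ℝ) ^ (B (K - j))) x hσ
        (hP _ hk₀mem) (hN _ hk₀mem) hx hxM
        (fun t => (∏ k ∈ Finset.Icc (K - j + 1) K, σ2 / (N k * P k) * Real.exp (σ2 / P k)) *
          nestInt σ2 P N B K j t) hGm hGnn
      rw [hsub, prod_Icc_split hk₀K (fun k => σ2 / (N k * P k) * Real.exp (σ2 / P k)), nestInt]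
      have hpull : ∫ t in Set.Ioo x ((2 : ℝ) ^ (B (K - j))),
          t ^ (1 / N (K - j) - 1) * x ^ (-(1 / N (K - j))) *
            Real.exp (-(σ2 / P (K - j)) * (t / x) ^ (1 / N (K - j))) *
            ((∏ k ∈ Finset.Icc (K - j + 1) K, σ2 / (N k * P k) * Real.exp (σ2 / P k)) *
              nestInt σ2 P N B K j t)
          = (∏ k ∈ Finset.Icc (K - j + 1) K, σ2 / (N k * P k) * Real.exp (σ2 / P k)) *
            ∫ t in Set.Ioo x ((2 : ℝ) ^ (B (K - j))),
              t ^ (1 / N (K - j) - 1) * x ^ (-(1 / N (K - j))) *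
                Real.exp (-(σ2 / P (K - j)) * (t / x) ^ (1 / N (K - j))) *
                nestInt σ2 P N B K j t := by
        rw [← integral_const_mul]
        refine setIntegral_congr_fun measurableSet_Ioo fun t ht => ?_
        ring
      rw [hpull]
      ring
    · -- degenerate case : the region is empty
      have hzero : ∀ y ∈ Set.Ioi (0 : ℝ), ENNReal.ofReal (Real.exp (-y)) *
          (if x * (1 + y * P (K - j) / σ2) ^ (N (K - j)) < (2 : ℝ) ^ (B (K - j)) then
            μ {ω | ∀ k ∈ Finset.Icc (K - j + 1) K,
              x * (1 + y * P (K - j) / σ2) ^ (N (K - j)) *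
                ∏ l ∈ Finset.Icc (K - j + 1) k, (1 + X l ω * P l / σ2) ^ (N l)
                  < (2 : ℝ) ^ (B k)}
          else 0) = 0 := by
        intro y hy
        have hupos : 0 < y * P (K - j) / σ2 := div_pos (mul_pos hy (hP _ hk₀mem)) hσ
        have h1 : (1 : ℝ) ≤ (1 + y * P (K - j) / σ2) ^ (N (K - j)) :=
          Real.one_le_rpow (by linarith) (hN _ hk₀mem).le
        have hnc : ¬ x * (1 + y * P (K - j) / σ2) ^ (N (K - j)) < (2 : ℝ) ^ (B (K - j)) := by
          push_neg
          push_neg at hxM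
          nlinarith
        rw [if_neg hnc, mul_zero]
      rw [setLIntegral_congr_fun measurableSet_Ioi hzero,
        lintegral_zero]
      have hni : nestInt σ2 P N B K (j + 1) x = 0 := by
        rw [nestInt, Set.Ioo_eq_empty hxM]
        simp
      rw [hni, mul_zero]
      simp

/-- **Integral representation of the exact `K`-round outage probability of VL-XP-HARQ**
(eq. (59)), obtained by the change of variables `x_k = Π_{l=1}^k (1+γ_l)^{N_l}`. -/
theorem outage_prob_K_rounds_integral
    {Ω : Type*} [MeasurableSpace Ω] (μ : Measure Ω) [IsProbabilityMeasure μ]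
    (K : ℕ) (hK : 1 ≤ K) (X : ℕ → Ω → ℝ) (hmeas : ∀ k, Measurable (X k))
    (hindep : iIndepFun X μ)
    (hlaw : ∀ k ∈ Finset.Icc 1 K, μ.map (X k) = expMeasure 1)
    (σ2 : ℝ) (hσ : 0 < σ2) (P N b B : ℕ → ℝ)
    (hP : ∀ k ∈ Finset.Icc 1 K, 0 < P k)
    (hN : ∀ k ∈ Finset.Icc 1 K, 0 < N k)
    (hb : ∀ k ∈ Finset.Icc 1 K, 0 < b k)
    (hB : ∀ k, B k = ∑ l ∈ Finset.Icc 1 k, b l) :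
    (μ {ω | ∀ k ∈ Finset.Icc 1 K,
        ∏ l ∈ Finset.Icc 1 k, (1 + X l ω * P l / σ2) ^ (N l)
          < (2 : ℝ) ^ (B k)}).toReal
      = (∏ k ∈ Finset.Icc 1 K, σ2 / (N k * P k) * Real.exp (σ2 / P k))
          * nestInt σ2 P N B K K 1 := by

  have h := aux_main μ K X hmeas hindep hlaw σ2 hσ P N B hP hN K le_rfl 1 one_pos
  have hKK : K - K + 1 = 1 := by omega
  rw [hKK] at h
  simpa using h
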